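/- Assume the log-moment condition and 2δ > σ². Setting m(λ) := −∫_0^λ φ(z)/ω(z) dz (which is finite for every λ ≥ 0 under the log-moment condition), one has ∫_0^∞ e^{m(λ)} dλ < ∞. -/

import Mathlib

open MeasureTheory Set

lemma aux_key {x : ℝ} (hx : 0 ≤ x) : 2 - x ≤ (2 + x) * Real.exp (-x) := by
  have hmono : MonotoneOn (fun x : ℝ => (2 + x) * Real.exp (-x) + x) (Ici 0) := by
    have hder : ∀ t : ℝ, HasDerivAt (fun x : ℝ => (2 + x) * Real.exp (-x) + x)
        (1 - (1 + t) * Real.exp (-t)) t := by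
      intro t
      have h1 : HasDerivAt (fun x : ℝ => -x) (-1) t := (hasDerivAt_id t).neg
      have h2 : HasDerivAt (fun x : ℝ => Real.exp (-x)) (Real.exp (-t) * (-1)) t :=
        (Real.hasDerivAt_exp (-t)).comp t h1
      have h3 : HasDerivAt (fun x : ℝ => 2 + x) 1 t := (hasDerivAt_id t).const_add 2
      have := (h3.mul h2).add (hasDerivAt_id t)
      refine this.congr_deriv ?_
      ring
    apply monotoneOn_of_deriv_nonneg (convex_Ici 0)
    · exact (Continuous.continuousOn (by continuity))
    · intro t ht
      exact (hder t).differentiableAt.differentiableWithinAt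
    · intro t ht
      rw [(hder t).deriv]
      have : (1 + t) * Real.exp (-t) ≤ 1 := by
        have h1 : 1 + t ≤ Real.exp t := by linarith [Real.add_one_le_exp t]
        have h2 : (1 + t) * Real.exp (-t) ≤ Real.exp t * Real.exp (-t) :=
          mul_le_mul_of_nonneg_right h1 (Real.exp_pos _).le
        rwa [← Real.exp_add, add_neg_cancel, Real.exp_zero] at h2
      linarith
  have h0 : (fun x : ℝ => (2 + x) * Real.exp (-x) + x) 0
      ≤ (fun x : ℝ => (2 + x) * Real.exp (-x) + x) x :=
    hmono (mem_Ici.mpr le_rfl) (mem_Ici.mpr hx) hx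
  simp only [neg_zero, Real.exp_zero, mul_one, add_zero] at h0
  linarith

lemma aux_one_sub_exp_le {x : ℝ} (hx : 0 ≤ x) : 1 - Real.exp (-x) ≤ 2 * x / (2 + x) := by
  have h2x : (0:ℝ) < 2 + x := by linarith
  rw [le_div_iff₀ h2x]
  have := aux_key hx
  have hexp : 0 < Real.exp (-x) := Real.exp_pos _
  nlinarith

set_option maxHeartbeats 2000000 in
/-- Assume the log-moment condition and 2δ > σ². Setting m(λ) := −∫_0^λ φ(z)/ω(z) dz
(which is finite for every λ ≥ 0 under the log-moment condition), one has
∫_0^∞ e^{m(λ)} dλ < ∞. -/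
theorem stmt_11
    (μ : Measure ℝ) (δ c σ : ℝ)
    (hμ0 : μ (Iic 0) = 0)
    (hμint : ∫⁻ u in Ioi (0:ℝ), ENNReal.ofReal (min 1 u) ∂μ < ⊤)
    (hδ : 0 ≤ δ) (hc : 0 < c) (hσ : 0 < σ)
    (hlog : ∫⁻ u in Ioi (1:ℝ), ENNReal.ofReal (Real.log u) ∂μ < ⊤)
    (h2δ : σ ^ 2 < 2 * δ)
    (φ ω m : ℝ → ℝ)
    (hφ : ∀ z, φ z = δ * z + ∫ u in Ioi (0:ℝ), (1 - Real.exp (-(z * u))) ∂μ)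
    (hω : ∀ z, ω z = c * z + σ ^ 2 * z ^ 2 / 2)
    (hm : ∀ lam, m lam = -∫ z in (0:ℝ)..lam, φ z / ω z) :
    (∀ lam : ℝ, 0 ≤ lam → IntervalIntegrable (fun z => φ z / ω z) volume 0 lam) ∧
    IntegrableOn (fun lam => Real.exp (m lam)) (Ioi 0) volume := by
  -- basic positivity facts
  have hσ2 : (0:ℝ) < σ ^ 2 := by positivity
  have hωpos : ∀ z : ℝ, 0 < z → 0 < ω z := by
    intro z hz; rw [hω]; positivity
  -- finiteness of μ on Ioi ε
  have hfin : ∀ ε : ℝ, 0 < ε → μ (Ioi ε) < ⊤ := by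
    intro ε hε
    have hmin : (0:ℝ) < min 1 ε := lt_min one_pos hε
    have hle : ENNReal.ofReal (min 1 ε) * μ (Ioi ε)
        ≤ ∫⁻ u in Ioi (0:ℝ), ENNReal.ofReal (min 1 u) ∂μ := by
      calc ENNReal.ofReal (min 1 ε) * μ (Ioi ε)
          = ∫⁻ _ in Ioi ε, ENNReal.ofReal (min 1 ε) ∂μ := (setLIntegral_const _ _).symm
        _ ≤ ∫⁻ u in Ioi ε, ENNReal.ofReal (min 1 u) ∂μ := by
            apply setLIntegral_mono (by fun_prop)
            intro u hu
            exact ENNReal.ofReal_le_ofReal (min_le_min le_rfl (le_of_lt hu))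
        _ ≤ ∫⁻ u in Ioi (0:ℝ), ENNReal.ofReal (min 1 u) ∂μ :=
            lintegral_mono_set (Ioi_subset_Ioi hε.le)
    by_contra h
    push_neg at h
    rw [top_le_iff.mp h, ENNReal.mul_top (by simp [hmin, ne_of_gt, hε])] at hle
    exact absurd (top_le_iff.mp hle) hμint.ne
  haveI hsf : SigmaFinite (μ.restrict (Ioi (0:ℝ))) := by
    refine ⟨⟨⟨fun n => Iic 0 ∪ Ioi (1/(n+1) : ℝ), fun _ => trivial, ?_, ?_⟩⟩⟩
    · intro n
      have h1 : μ.restrict (Ioi (0:ℝ)) (Iic 0) ≤ μ (Iic 0) := Measure.restrict_apply_le _ _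
      have h2 : μ.restrict (Ioi (0:ℝ)) (Ioi (1/(n+1) : ℝ)) ≤ μ (Ioi (1/(n+1) : ℝ)) :=
        Measure.restrict_apply_le _ _
      have hpos : (0:ℝ) < 1/(n+1) := by positivity
      calc μ.restrict (Ioi (0:ℝ)) (Iic 0 ∪ Ioi (1/(n+1) : ℝ))
          ≤ μ.restrict (Ioi (0:ℝ)) (Iic 0) + μ.restrict (Ioi (0:ℝ)) (Ioi (1/(n+1) : ℝ)) :=
            measure_union_le _ _
        _ ≤ 0 + μ (Ioi (1/(n+1) : ℝ)) := by rw [hμ0] at h1; exact add_le_add h1 h2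
        _ < ⊤ := by rw [zero_add]; exact hfin _ hpos
    · rw [iUnion_eq_univ_iff]
      intro x
      rcases le_or_gt x 0 with hx | hx
      · exact ⟨0, Or.inl hx⟩
      · obtain ⟨n, hn⟩ := exists_nat_one_div_lt hx
        exact ⟨n, Or.inr hn⟩
  -- nonnegativity of the jump integrand
  have hnn : ∀ z : ℝ, 0 ≤ z →
      (0:ℝ → ℝ) ≤ᵐ[μ.restrict (Ioi (0:ℝ))] fun u => 1 - Real.exp (-(z * u)) := by
    intro z hz
    filter_upwards [ae_restrict_mem measurableSet_Ioi] with u hu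
    have h1 : -(z * u) ≤ 0 := by simp only [neg_nonpos]; exact mul_nonneg hz hu.le
    have := Real.exp_le_exp.mpr h1
    rw [Real.exp_zero] at this
    simpa using this
  have hφnn : ∀ z : ℝ, 0 ≤ z → 0 ≤ φ z := by
    intro z hz
    rw [hφ]
    have h2 : 0 ≤ ∫ u in Ioi (0:ℝ), (1 - Real.exp (-(z * u))) ∂μ :=
      integral_nonneg_of_ae (hnn z hz)
    positivity
  have hφδ : ∀ z : ℝ, 0 ≤ z → δ * z ≤ φ z := by
    intro z hz
    rw [hφ]
    have h2 : 0 ≤ ∫ u in Ioi (0:ℝ), (1 - Real.exp (-(z * u))) ∂μ :=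
      integral_nonneg_of_ae (hnn z hz)
    linarith
  -- pointwise lintegral representation of φ
  have hφz : ∀ z : ℝ, 0 ≤ z → φ z = δ * z +
      (∫⁻ u in Ioi (0:ℝ), ENNReal.ofReal (1 - Real.exp (-(z * u))) ∂μ).toReal := by
    intro z hz
    rw [hφ, integral_eq_lintegral_of_nonneg_ae (hnn z hz)
      (Continuous.aestronglyMeasurable (by continuity))]
  -- integrability of min 1 u
  have hmin_int : Integrable (fun u => min 1 u) (μ.restrict (Ioi (0:ℝ))) := by
    refine ⟨(by fun_prop : Measurable fun u : ℝ => min 1 u).aestronglyMeasurable, ?_⟩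
    rw [hasFiniteIntegral_iff_norm]
    calc ∫⁻ u in Ioi (0:ℝ), ENNReal.ofReal ‖min 1 u‖ ∂μ
        = ∫⁻ u in Ioi (0:ℝ), ENNReal.ofReal (min 1 u) ∂μ := by
          apply setLIntegral_congr_fun measurableSet_Ioi
          intro u hu; dsimp only
          rw [Real.norm_eq_abs, abs_of_pos (lt_min one_pos hu)]
      _ < ⊤ := hμint
  -- Part A: integrability of φ/ω on Ioc 0 lam
  have partA : ∀ lam : ℝ, 0 ≤ lam →
      IntegrableOn (fun z => φ z / ω z) (Ioc 0 lam) volume := by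
    intro lam hlam
    -- measurability
    have hGmeas : Measurable fun z : ℝ =>
        ∫⁻ u in Ioi (0:ℝ), ENNReal.ofReal (1 - Real.exp (-(z * u))) ∂μ := by
      have h : Measurable (Function.uncurry fun (z u : ℝ) =>
          ENNReal.ofReal (1 - Real.exp (-(z * u)))) := by fun_prop
      exact h.lintegral_prod_right
    have hmeasA : AEStronglyMeasurable (fun z => φ z / ω z)
        (volume.restrict (Ioc (0:ℝ) lam)) := by
      have h1 : Measurable fun z : ℝ =>
          (δ * z + (∫⁻ u in Ioi (0:ℝ), ENNReal.ofReal (1 - Real.exp (-(z * u))) ∂μ).toReal)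
            / (c * z + σ ^ 2 * z ^ 2 / 2) := by
        apply Measurable.div
        · exact ((measurable_id.const_mul δ).add hGmeas.ennreal_toReal)
        · fun_prop
      apply h1.aestronglyMeasurable.congr
      filter_upwards [ae_restrict_mem measurableSet_Ioc] with z hz
      rw [hφz z hz.1.le, hω]
    refine ⟨hmeasA, ?_⟩
    -- the double-integral bound function
    set Hb : ℝ → ENNReal :=
      fun z => ∫⁻ u in Ioi (0:ℝ), ENNReal.ofReal (2 * u / (2 + z * u)) ∂μ with hHbdef
    have hHbmeas : Measurable Hb := by
      have h : Measurable (Function.uncurry fun (z u : ℝ) =>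
          ENNReal.ofReal (2 * u / (2 + z * u))) := by fun_prop
      exact h.lintegral_prod_right
    -- pointwise bound
    have hpt : ∀ z ∈ Ioc (0:ℝ) lam, ENNReal.ofReal (φ z / ω z)
        ≤ ENNReal.ofReal (δ / c) + ENNReal.ofReal (1 / c) * Hb z := by
      intro z hz
      have hz0 : 0 < z := hz.1
      have hcz : (0:ℝ) < c * z := by positivity
      have hb1 : φ z / ω z ≤ φ z / (c * z) := by
        apply div_le_div_of_nonneg_left (hφnn z hz0.le) hcz
        rw [hω]; nlinarith
      have hb2 : φ z / (c * z) = δ / c +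
          (1 / c) * ((∫ u in Ioi (0:ℝ), (1 - Real.exp (-(z * u))) ∂μ) / z) := by
        rw [hφ]
        field_simp
      -- integrability of the rescaled integrand
      have hint2 : Integrable (fun u => (1 - Real.exp (-(z * u))) / z)
          (μ.restrict (Ioi (0:ℝ))) := by
        apply Integrable.mono' (hmin_int.const_mul (max (1/z) 1))
          (Continuous.aestronglyMeasurable (by continuity))
        filter_upwards [ae_restrict_mem measurableSet_Ioi] with u hu
        have hu0 : (0:ℝ) < u := hu
        have hzu : 0 ≤ z * u := mul_nonneg hz0.le hu0.le
        have hexp1 : Real.exp (-(z * u)) ≤ 1 := by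
          rw [← Real.exp_zero]
          exact Real.exp_le_exp.mpr (by linarith)
        have hexp2 : 1 - z * u ≤ Real.exp (-(z * u)) := by
          linarith [Real.add_one_le_exp (-(z * u))]
        rw [Real.norm_eq_abs, abs_of_nonneg (div_nonneg (by linarith) hz0.le)]
        rcases le_or_gt u 1 with hu1 | hu1
        · rw [min_eq_right hu1]
          have h5 : (1 - Real.exp (-(z * u))) / z ≤ u := by
            rw [div_le_iff₀ hz0]
            nlinarith
          nlinarith [le_max_right (1/z) (1:ℝ)]
        · rw [min_eq_left hu1.le]
          have h5 : (1 - Real.exp (-(z * u))) / z ≤ 1 / z := by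
            gcongr
            linarith [Real.exp_pos (-(z * u))]
          calc (1 - Real.exp (-(z * u))) / z ≤ 1 / z := h5
            _ ≤ max (1/z) 1 * 1 := by rw [mul_one]; exact le_max_left _ _
      have hF : ENNReal.ofReal ((∫ u in Ioi (0:ℝ), (1 - Real.exp (-(z * u))) ∂μ) / z)
          ≤ Hb z := by
        rw [← integral_div]
        rw [ofReal_integral_eq_lintegral_ofReal hint2 (by
          filter_upwards [ae_restrict_mem measurableSet_Ioi] with u hu
          have hu0 : (0:ℝ) < u := hu
          have hzu : 0 ≤ z * u := mul_nonneg hz0.le hu0.le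
          have hexp1 : Real.exp (-(z * u)) ≤ 1 := by
            rw [← Real.exp_zero]
            exact Real.exp_le_exp.mpr (by linarith)
          exact div_nonneg (by linarith) hz0.le)]
        apply lintegral_mono_ae
        filter_upwards [ae_restrict_mem measurableSet_Ioi] with u hu
        apply ENNReal.ofReal_le_ofReal
        have hu0 : (0:ℝ) < u := hu
        have hzu : (0:ℝ) ≤ z * u := mul_nonneg hz0.le hu0.le
        have h2zu : (0:ℝ) < 2 + z * u := by linarith
        have := aux_one_sub_exp_le hzu
        have heq : (2 * (z * u) / (2 + z * u)) / z = 2 * u / (2 + z * u) := by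
          field_simp
        rw [← heq]
        exact div_le_div_of_nonneg_right this hz0.le
      calc ENNReal.ofReal (φ z / ω z)
          ≤ ENNReal.ofReal (δ / c +
              (1 / c) * ((∫ u in Ioi (0:ℝ), (1 - Real.exp (-(z * u))) ∂μ) / z)) := by
            apply ENNReal.ofReal_le_ofReal
            rw [← hb2]; exact hb1
        _ ≤ ENNReal.ofReal (δ / c) + ENNReal.ofReal
              ((1 / c) * ((∫ u in Ioi (0:ℝ), (1 - Real.exp (-(z * u))) ∂μ) / z)) :=
            ENNReal.ofReal_add_le
        _ ≤ ENNReal.ofReal (δ / c) + ENNReal.ofReal (1 / c) * Hb z := by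
            gcongr
            rw [ENNReal.ofReal_mul (by positivity)]
            exact mul_le_mul_right hF _
    -- the swap / Tonelli step
    have hswap : ∫⁻ z in Ioc (0:ℝ) lam, Hb z ∂volume
        = ∫⁻ u in Ioi (0:ℝ), (∫⁻ z in Ioc (0:ℝ) lam,
            ENNReal.ofReal (2 * u / (2 + z * u)) ∂volume) ∂μ := by
      apply lintegral_lintegral_swap
      apply Measurable.aemeasurable
      fun_prop
    -- inner integral computation
    have hinner : ∀ u : ℝ, u ∈ Ioi (0:ℝ) →
        (∫⁻ z in Ioc (0:ℝ) lam, ENNReal.ofReal (2 * u / (2 + z * u)) ∂volume)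
          = ENNReal.ofReal (2 * Real.log (2 + lam * u) - 2 * Real.log 2) := by
      intro u hu
      have hu0 : (0:ℝ) < u := hu
      have hIcont : ContinuousOn (fun z : ℝ => 2 * u / (2 + z * u)) (Icc 0 lam) := by
        apply ContinuousOn.div continuousOn_const (by fun_prop)
        intro z hz
        have := hz.1
        nlinarith
      have hIint : IntegrableOn (fun z : ℝ => 2 * u / (2 + z * u)) (Ioc 0 lam) volume :=
        (hIcont.integrableOn_Icc).mono_set Ioc_subset_Icc_self
      rw [← ofReal_integral_eq_lintegral_ofReal hIint (by
        filter_upwards [ae_restrict_mem measurableSet_Ioc] with z hz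
        have hz0 := hz.1
        positivity)]
      congr 1
      rw [← intervalIntegral.integral_of_le hlam]
      have hder : ∀ t ∈ uIcc (0:ℝ) lam, HasDerivAt (fun z : ℝ => 2 * Real.log (2 + z * u))
          (2 * u / (2 + t * u)) t := by
        intro t ht
        rw [uIcc_of_le hlam] at ht
        have ht0 : (0:ℝ) ≤ t := ht.1
        have hden : (0:ℝ) < 2 + t * u := by positivity
        have h1 : HasDerivAt (fun z : ℝ => 2 + z * u) u t := by
          simpa using (hasDerivAt_mul_const u).const_add 2
        have h2 := ((Real.hasDerivAt_log hden.ne').comp t h1).const_mul 2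
        refine h2.congr_deriv ?_
        field_simp
      rw [intervalIntegral.integral_eq_sub_of_hasDerivAt hder (by
        apply ContinuousOn.intervalIntegrable
        rwa [uIcc_of_le hlam])]
      norm_num
    -- finiteness of the u-integral
    have hfin3 : ∫⁻ u in Ioi (0:ℝ),
        ENNReal.ofReal (2 * Real.log (2 + lam * u) - 2 * Real.log 2) ∂μ < ⊤ := by
      rw [← Ioc_union_Ioi_eq_Ioi (zero_le_one (α := ℝ)),
        lintegral_union measurableSet_Ioi Ioc_disjoint_Ioi_same]
      have hp1 : ∫⁻ u in Ioc (0:ℝ) 1,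
          ENNReal.ofReal (2 * Real.log (2 + lam * u) - 2 * Real.log 2) ∂μ < ⊤ := by
        have hbd : ∀ u ∈ Ioc (0:ℝ) 1, ENNReal.ofReal (2 * Real.log (2 + lam * u)
            - 2 * Real.log 2) ≤ ENNReal.ofReal lam * ENNReal.ofReal (min 1 u) := by
          intro u hu
          have hu0 : 0 < u := hu.1
          have hden : (0:ℝ) < 2 + lam * u := by positivity
          have hlg : Real.log (2 + lam * u) - Real.log 2
              = Real.log ((2 + lam * u) / 2) := (Real.log_div hden.ne' two_ne_zero).symm
          have hlg2 : Real.log ((2 + lam * u) / 2) ≤ (2 + lam * u) / 2 - 1 :=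
            Real.log_le_sub_one_of_pos (by positivity)
          rw [← ENNReal.ofReal_mul (by positivity), min_eq_right hu.2]
          apply ENNReal.ofReal_le_ofReal
          nlinarith
        calc ∫⁻ u in Ioc (0:ℝ) 1,
            ENNReal.ofReal (2 * Real.log (2 + lam * u) - 2 * Real.log 2) ∂μ
            ≤ ∫⁻ u in Ioc (0:ℝ) 1, ENNReal.ofReal lam * ENNReal.ofReal (min 1 u) ∂μ :=
              setLIntegral_mono (by fun_prop) hbd
          _ = ENNReal.ofReal lam * ∫⁻ u in Ioc (0:ℝ) 1, ENNReal.ofReal (min 1 u) ∂μ :=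
              lintegral_const_mul _ (by fun_prop)
          _ ≤ ENNReal.ofReal lam * ∫⁻ u in Ioi (0:ℝ), ENNReal.ofReal (min 1 u) ∂μ := by
              gcongr
              exact Ioc_subset_Ioi_self
          _ < ⊤ := ENNReal.mul_lt_top ENNReal.ofReal_lt_top hμint
      have hp2 : ∫⁻ u in Ioi (1:ℝ),
          ENNReal.ofReal (2 * Real.log (2 + lam * u) - 2 * Real.log 2) ∂μ < ⊤ := by
        have hbd : ∀ u ∈ Ioi (1:ℝ), ENNReal.ofReal (2 * Real.log (2 + lam * u)
            - 2 * Real.log 2) ≤ ENNReal.ofReal (2 * Real.log (2 + lam))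
              + ENNReal.ofReal 2 * ENNReal.ofReal (Real.log u) := by
          intro u hu
          have hu1 : (1:ℝ) < u := hu
          have hu0 : (0:ℝ) < u := lt_trans one_pos hu1
          have hden : (0:ℝ) < 2 + lam * u := by positivity
          have hlogu : 0 ≤ Real.log u := Real.log_nonneg hu1.le
          have hkey : Real.log (2 + lam * u) ≤ Real.log (2 + lam) + Real.log u := by
            have h1 : 2 + lam * u ≤ (2 + lam) * u := by nlinarith
            calc Real.log (2 + lam * u) ≤ Real.log ((2 + lam) * u) :=
                  Real.log_le_log hden h1
              _ = Real.log (2 + lam) + Real.log u :=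
                  Real.log_mul (by positivity) hu0.ne'
          have hlog2 : 0 ≤ Real.log 2 := Real.log_nonneg one_le_two
          calc ENNReal.ofReal (2 * Real.log (2 + lam * u) - 2 * Real.log 2)
              ≤ ENNReal.ofReal (2 * Real.log (2 + lam) + 2 * Real.log u) :=
                ENNReal.ofReal_le_ofReal (by linarith)
            _ ≤ ENNReal.ofReal (2 * Real.log (2 + lam))
                + ENNReal.ofReal (2 * Real.log u) := ENNReal.ofReal_add_le
            _ = ENNReal.ofReal (2 * Real.log (2 + lam))
                + ENNReal.ofReal 2 * ENNReal.ofReal (Real.log u) := by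
                rw [show ENNReal.ofReal (2 * Real.log u)
                  = ENNReal.ofReal 2 * ENNReal.ofReal (Real.log u) from
                    ENNReal.ofReal_mul (by norm_num)]
        calc ∫⁻ u in Ioi (1:ℝ),
            ENNReal.ofReal (2 * Real.log (2 + lam * u) - 2 * Real.log 2) ∂μ
            ≤ ∫⁻ u in Ioi (1:ℝ), (ENNReal.ofReal (2 * Real.log (2 + lam))
              + ENNReal.ofReal 2 * ENNReal.ofReal (Real.log u)) ∂μ :=
              setLIntegral_mono (measurable_const.add
                ((ENNReal.measurable_ofReal.comp Real.measurable_log).const_mul _)) hbd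
          _ = ENNReal.ofReal (2 * Real.log (2 + lam)) * μ (Ioi 1)
              + ENNReal.ofReal 2 * ∫⁻ u in Ioi (1:ℝ), ENNReal.ofReal (Real.log u) ∂μ := by
              rw [lintegral_add_left measurable_const, setLIntegral_const,
                lintegral_const_mul _
                  (show Measurable fun u : ℝ => ENNReal.ofReal (Real.log u) from
                    ENNReal.measurable_ofReal.comp Real.measurable_log)]
          _ < ⊤ := by
              apply ENNReal.add_lt_top.mpr
              constructor
              · exact ENNReal.mul_lt_top ENNReal.ofReal_lt_top (hfin 1 one_pos)
              · exact ENNReal.mul_lt_top ENNReal.ofReal_lt_top hlog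
      exact ENNReal.add_lt_top.mpr ⟨hp1, hp2⟩
    -- conclude HasFiniteIntegral
    rw [hasFiniteIntegral_iff_norm]
    calc ∫⁻ z in Ioc (0:ℝ) lam, ENNReal.ofReal ‖φ z / ω z‖ ∂volume
        = ∫⁻ z in Ioc (0:ℝ) lam, ENNReal.ofReal (φ z / ω z) ∂volume := by
          apply setLIntegral_congr_fun measurableSet_Ioc
          intro z hz; dsimp only
          rw [Real.norm_eq_abs, abs_of_nonneg (div_nonneg (hφnn z hz.1.le) (hωpos z hz.1).le)]
      _ ≤ ∫⁻ z in Ioc (0:ℝ) lam,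
            (ENNReal.ofReal (δ / c) + ENNReal.ofReal (1 / c) * Hb z) ∂volume :=
          setLIntegral_mono (by fun_prop) hpt
      _ = ENNReal.ofReal (δ / c) * volume (Ioc (0:ℝ) lam)
          + ENNReal.ofReal (1 / c) * ∫⁻ z in Ioc (0:ℝ) lam, Hb z ∂volume := by
          rw [lintegral_add_left measurable_const, setLIntegral_const,
            lintegral_const_mul _ hHbmeas]
      _ < ⊤ := by
          apply ENNReal.add_lt_top.mpr
          constructor
          · exact ENNReal.mul_lt_top ENNReal.ofReal_lt_top
              (by rw [Real.volume_Ioc]; exact ENNReal.ofReal_lt_top)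
          · apply ENNReal.mul_lt_top ENNReal.ofReal_lt_top
            rw [hswap]
            calc ∫⁻ u in Ioi (0:ℝ), (∫⁻ z in Ioc (0:ℝ) lam,
                  ENNReal.ofReal (2 * u / (2 + z * u)) ∂volume) ∂μ
                = ∫⁻ u in Ioi (0:ℝ),
                    ENNReal.ofReal (2 * Real.log (2 + lam * u) - 2 * Real.log 2) ∂μ := by
                  apply setLIntegral_congr_fun measurableSet_Ioi
                  intro u hu
                  exact hinner u hu
              _ < ⊤ := hfin3
  have part1 : ∀ lam : ℝ, 0 ≤ lam → IntervalIntegrable (fun z => φ z / ω z) volume 0 lam := by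
    intro lam hlam
    exact (intervalIntegrable_iff_integrableOn_Ioc_of_le hlam).mpr (partA lam hlam)
  refine ⟨part1, ?_⟩
  -- Part B
  have hIoc : ∀ b : ℝ, IntegrableOn (fun z => φ z / ω z) (Ioc 0 b) volume := by
    intro b
    rcases le_or_gt b 0 with hb | hb
    · rw [Ioc_eq_empty (by exact fun h => absurd (lt_of_lt_of_le h hb) (lt_irrefl 0))]
      exact integrableOn_empty
    · exact partA b hb.le
  have hfnn : ∀ b : ℝ, (0:ℝ → ℝ) ≤ᵐ[volume.restrict (Ioc (0:ℝ) b)] fun z => φ z / ω z := by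
    intro b
    filter_upwards [ae_restrict_mem measurableSet_Ioc] with z hz
    exact div_nonneg (hφnn z hz.1.le) (hωpos z hz.1).le
  set M : ℝ → ℝ := fun b => ∫ z in Ioc (0:ℝ) b, φ z / ω z ∂volume with hM
  have hMono : Monotone M := by
    intro a b hab
    exact setIntegral_mono_set (hIoc b) (hfnn b)
      (HasSubset.Subset.eventuallyLE (Ioc_subset_Ioc_right hab))
  have hMmeas : Measurable M := hMono.measurable
  set p : ℝ := 2 * δ / σ ^ 2 with hpdef
  have hp1 : 1 < p := by
    rw [hpdef, lt_div_iff₀ hσ2]; linarith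
  have hp0 : 0 < p := lt_trans one_pos hp1
  set a : ℝ := σ ^ 2 / (2 * c) with hadef
  have ha : 0 < a := by positivity
  -- key upper bound for m
  have hkey : ∀ lam : ℝ, 0 < lam → Real.exp (m lam) ≤ (1 + a * lam) ^ (-p) := by
    intro lam hlam
    have hψcont : ContinuousOn (fun z : ℝ => δ / (c + σ ^ 2 * z / 2)) (Icc 0 lam) := by
      apply ContinuousOn.div continuousOn_const (by fun_prop)
      intro z hz
      have := hz.1
      positivity
    have hψint : IntervalIntegrable (fun z : ℝ => δ / (c + σ ^ 2 * z / 2)) volume 0 lam := by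
      apply ContinuousOn.intervalIntegrable
      rwa [uIcc_of_le hlam.le]
    have h0ne : ∀ᵐ z : ℝ ∂volume, z ≠ 0 := by
      rw [ae_iff]
      simp only [not_not, setOf_eq_eq_singleton]
      exact measure_singleton 0
    have hmono : ∫ z in (0:ℝ)..lam, δ / (c + σ ^ 2 * z / 2)
        ≤ ∫ z in (0:ℝ)..lam, φ z / ω z := by
      apply intervalIntegral.integral_mono_ae_restrict hlam.le hψint (part1 lam hlam.le)
      filter_upwards [ae_restrict_mem measurableSet_Icc, ae_restrict_of_ae h0ne] with z hz hzne
      have hz0 : 0 < z := lt_of_le_of_ne hz.1 (Ne.symm hzne)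
      have he : δ / (c + σ ^ 2 * z / 2) = δ * z / ω z := by
        rw [hω]
        rw [div_eq_div_iff (by positivity) (by nlinarith)]
        ring
      rw [he]
      exact (div_le_div_iff_of_pos_right (hωpos z hz0)).mpr (hφδ z hz0.le)
    have hA : (0:ℝ) < c + σ ^ 2 * lam / 2 := by positivity
    have hcompute : ∫ z in (0:ℝ)..lam, δ / (c + σ ^ 2 * z / 2)
        = p * Real.log (c + σ ^ 2 * lam / 2) - p * Real.log c := by
      have hF : ∀ t ∈ uIcc (0:ℝ) lam, HasDerivAt
          (fun z : ℝ => p * Real.log (c + σ ^ 2 * z / 2)) (δ / (c + σ ^ 2 * t / 2)) t := by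
        intro t ht
        rw [uIcc_of_le hlam.le] at ht
        have ht0 : (0:ℝ) ≤ t := ht.1
        have hden : (0:ℝ) < c + σ ^ 2 * t / 2 := by positivity
        have h1 : HasDerivAt (fun z : ℝ => c + σ ^ 2 * z / 2) (σ ^ 2 / 2) t := by
          have := (((hasDerivAt_id t).const_mul (σ ^ 2)).div_const 2).const_add c
          simpa using this
        have h2 := (Real.hasDerivAt_log hden.ne').comp t h1
        have h3 := h2.const_mul p
        refine h3.congr_deriv ?_
        rw [hpdef]
        field_simp
      rw [intervalIntegral.integral_eq_sub_of_hasDerivAt hF hψint]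
      norm_num
    rw [hm]
    have hlg : Real.log (1 + a * lam) = Real.log (c + σ ^ 2 * lam / 2) - Real.log c := by
      have : 1 + a * lam = (c + σ ^ 2 * lam / 2) / c := by
        rw [hadef]; field_simp
      rw [this, Real.log_div hA.ne' hc.ne']
    rw [Real.rpow_def_of_pos (by positivity)]
    apply Real.exp_le_exp.mpr
    rw [hlg]
    rw [hcompute] at hmono
    nlinarith [hmono]
  -- integrability of the dominating function
  have hgint : IntegrableOn (fun lam => (1 + a * lam) ^ (-p)) (Ioi (0:ℝ)) volume := by
    have hcont : ∀ s : Set ℝ, s ⊆ Ici 0 →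
        ContinuousOn (fun lam : ℝ => (1 + a * lam) ^ (-p)) s := by
      intro s hs
      apply ContinuousOn.rpow_const (by fun_prop)
      intro x hx
      have : (0:ℝ) ≤ x := hs hx
      left
      positivity
    have h1 : IntegrableOn (fun lam : ℝ => (1 + a * lam) ^ (-p)) (Ioc (0:ℝ) 1) volume :=
      ((hcont (Icc 0 1) Icc_subset_Ici_self).integrableOn_Icc).mono_set Ioc_subset_Icc_self
    have h2 : IntegrableOn (fun lam : ℝ => (1 + a * lam) ^ (-p)) (Ioi (1:ℝ)) volume := by
      have hbase : IntegrableOn (fun t : ℝ => a ^ (-p) * t ^ (-p)) (Ioi (1:ℝ)) volume :=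
        (integrableOn_Ioi_rpow_of_lt (by linarith) one_pos).const_mul _
      apply Integrable.mono' hbase
        ((hcont (Ioi 1) (fun x hx => mem_Ici.mpr (le_of_lt (lt_trans one_pos hx)))).aestronglyMeasurable
          measurableSet_Ioi)
      filter_upwards [ae_restrict_mem measurableSet_Ioi] with lam hlam
      have hlam0 : (0:ℝ) < lam := lt_trans one_pos hlam
      rw [Real.norm_eq_abs, abs_of_nonneg (Real.rpow_nonneg (by positivity) _)]
      calc (1 + a * lam) ^ (-p) ≤ (a * lam) ^ (-p) :=
            Real.rpow_le_rpow_of_nonpos (by positivity) (by linarith) (by linarith)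
        _ = a ^ (-p) * lam ^ (-p) := Real.mul_rpow ha.le hlam0.le
    rw [show Ioi (0:ℝ) = Ioc 0 1 ∪ Ioi 1 from (Ioc_union_Ioi_eq_Ioi zero_le_one).symm]
    exact h1.union h2
  -- measurability of exp ∘ m on Ioi 0
  have hmeasB : AEStronglyMeasurable (fun lam => Real.exp (m lam))
      (volume.restrict (Ioi (0:ℝ))) := by
    apply (Measurable.aestronglyMeasurable
      (by fun_prop : Measurable fun lam => Real.exp (-M lam))).congr
    filter_upwards [ae_restrict_mem measurableSet_Ioi] with lam hlam
    rw [hm, intervalIntegral.integral_of_le (le_of_lt hlam)]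
  exact Integrable.mono' hgint hmeasB (by
    filter_upwards [ae_restrict_mem measurableSet_Ioi] with lam hlam
    rw [Real.norm_eq_abs, abs_of_pos (Real.exp_pos _)]
    exact hkey lam hlam)
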